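/- arXiv:2410.00696 — 2 statements merged into one kernel-verified Lean document; each statement's English description precedes it below -/
import Mathlib

section
/- Let B, γ, ω₀, α > 0 and S(ε, I₀) = ε(3γ/(4ω₀) + (√2 B/(8ω₀))·I₀^{-3/2}). In the regime where I₀ is large (so that the I₀^{-3/2} term is neglected and S ≈ 3εγ/(4ω₀), and where the width condition is evaluated at the saddle amplitude), the threshold condition -ε(√2 B/(2ω₀)) + α/S < 0 on ε, after substituting the appropriate critical value of I₀, holds if and only if ε² > (2^{10/3}/3^{5/3})·B^{-4/3}·γ^{-2/3}·ω₀²·α. -/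
open Real

/-- Cube of an rpow back to rational exponent. -/
private lemma cube_rpow (x a : ℝ) (hx : 0 < x) : (x ^ (a : ℝ)) ^ (3 : ℕ) = x ^ (a * 3) := by
  rw [← Real.rpow_natCast (x ^ (a:ℝ)) 3, ← Real.rpow_mul hx.le]
  norm_num

/-- Autoresonance threshold: with S(ε, I₀) = ε(3γ/(4ω₀) + (√2B/(8ω₀))I₀^{-3/2})
and the width condition -ε(√2B/(2ω₀))√I₀ + α/S < 0 evaluated at the critical
(saddle) amplitude I₀ = (√2B/(3γ))^{2/3}, the condition holds iff
ε² > (2^{10/3}/3^{5/3}) B^{-4/3} γ^{-2/3} ω₀² α. -/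
theorem stmt_10 (B γ ω₀ α ε : ℝ) (hB : B > 0) (hγ : γ > 0) (hω : ω₀ > 0)
    (hα : α > 0) (hε : ε > 0)
    (I₀ S : ℝ)
    (hI₀ : I₀ = (Real.sqrt 2 * B / (3 * γ)) ^ ((2 : ℝ) / 3))
    (hS : S = ε * (3 * γ / (4 * ω₀) + (Real.sqrt 2 * B / (8 * ω₀)) * I₀ ^ (-(3 : ℝ) / 2))) :
    (-ε * (Real.sqrt 2 * B / (2 * ω₀)) * Real.sqrt I₀ + α / S < 0 ↔
      ε ^ 2 > ((2 : ℝ) ^ ((10 : ℝ) / 3) / (3 : ℝ) ^ ((5 : ℝ) / 3)) *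
        B ^ (-(4 : ℝ) / 3) * γ ^ (-(2 : ℝ) / 3) * ω₀ ^ 2 * α) := by
  have h2 : (0:ℝ) < Real.sqrt 2 := Real.sqrt_pos.mpr (by norm_num)
  set x : ℝ := Real.sqrt 2 * B / (3 * γ) with hxdef
  have hx : 0 < x := by positivity
  -- I₀ facts
  have hIinv : I₀ ^ (-(3 : ℝ) / 2) = x⁻¹ := by
    rw [hI₀, ← Real.rpow_mul hx.le]
    norm_num [Real.rpow_neg_one]
  have hIsqrt : Real.sqrt I₀ = x ^ ((1:ℝ)/3) := by
    rw [hI₀, Real.sqrt_eq_rpow, ← Real.rpow_mul hx.le]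
    norm_num
  -- simplify S
  have hsB : Real.sqrt 2 * B = 3 * γ * x := by
    field_simp [hxdef]
    rw [hxdef]; field_simp
  have hS' : S = ε * (9 * γ / (8 * ω₀)) := by
    rw [hS, hIinv, hsB]
    field_simp
    ring
  have hSpos : 0 < S := by rw [hS']; positivity
  -- the coefficient D
  have hx43 : 0 < x ^ ((4:ℝ)/3) := Real.rpow_pos_of_pos hx _
  have hxx : x * x ^ ((1:ℝ)/3) = x ^ ((4:ℝ)/3) := by
    nth_rewrite 1 [← Real.rpow_one x]
    rw [← Real.rpow_add hx]; norm_num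
  set K : ℝ := ((2 : ℝ) ^ ((10 : ℝ) / 3) / (3 : ℝ) ^ ((5 : ℝ) / 3)) *
        B ^ (-(4 : ℝ) / 3) * γ ^ (-(2 : ℝ) / 3) * ω₀ ^ 2 * α with hK
  -- key constant equality
  have hKeq : K * (27 * γ ^ 2 / (16 * ω₀ ^ 2) * x ^ ((4:ℝ)/3)) = α := by
    have hKpos : 0 < K := by
      rw [hK]; positivity
    have h3 : (K * (27 * γ ^ 2 / (16 * ω₀ ^ 2) * x ^ ((4:ℝ)/3))) ^ (3:ℕ) = α ^ (3:ℕ) := by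
      have e1 : ((2:ℝ) ^ ((10:ℝ)/3)) ^ (3:ℕ) = 2 ^ (10 : ℕ) := by
        rw [cube_rpow _ _ (by norm_num)]; norm_num [Real.rpow_natCast]
      have e2 : ((3:ℝ) ^ ((5:ℝ)/3)) ^ (3:ℕ) = 3 ^ (5 : ℕ) := by
        rw [cube_rpow _ _ (by norm_num)]; norm_num [Real.rpow_natCast]
      have e3 : (B ^ (-(4:ℝ)/3)) ^ (3:ℕ) = (B ^ (4:ℕ))⁻¹ := by
        rw [cube_rpow _ _ hB, show (-(4:ℝ)/3 * 3) = -(4:ℝ) by norm_num,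
          Real.rpow_neg hB.le, show (4:ℝ) = ((4:ℕ):ℝ) by norm_num, Real.rpow_natCast]
      have e4 : (γ ^ (-(2:ℝ)/3)) ^ (3:ℕ) = (γ ^ (2:ℕ))⁻¹ := by
        rw [cube_rpow _ _ hγ, show (-(2:ℝ)/3 * 3) = -(2:ℝ) by norm_num,
          Real.rpow_neg hγ.le, show (2:ℝ) = ((2:ℕ):ℝ) by norm_num, Real.rpow_natCast]
      have e5 : (x ^ ((4:ℝ)/3)) ^ (3:ℕ) = x ^ (4:ℕ) := by
        rw [cube_rpow _ _ hx]
        rw [show ((4:ℝ)/3 * 3) = ((4:ℕ) : ℝ) by norm_num, Real.rpow_natCast]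
      have hs2 : Real.sqrt 2 ^ 2 = 2 := Real.sq_sqrt (by norm_num)
      have e6 : x ^ (4:ℕ) = 4 * B ^ 4 / (3 * γ) ^ 4 := by
        rw [hxdef, div_pow, mul_pow]
        norm_num [show Real.sqrt 2 ^ 4 = (Real.sqrt 2 ^ 2) ^ 2 by ring, hs2]
      rw [hK]
      rw [mul_pow, mul_pow, mul_pow, mul_pow, mul_pow, div_pow, mul_pow, div_pow]
      rw [e1, e2, e3, e4, e5, e6]
      field_simp
      ring
    have hL : 0 ≤ K * (27 * γ ^ 2 / (16 * ω₀ ^ 2) * x ^ ((4:ℝ)/3)) := by positivity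
    exact (pow_left_inj₀ hL hα.le (by norm_num)).mp h3
  -- main chain
  rw [hIsqrt, hS']
  constructor
  · intro h
    have h1 : α / (ε * (9 * γ / (8 * ω₀))) < ε * (Real.sqrt 2 * B / (2 * ω₀)) * x ^ ((1:ℝ)/3) := by
      linarith
    have h2' : α < ε * (Real.sqrt 2 * B / (2 * ω₀)) * x ^ ((1:ℝ)/3) * (ε * (9 * γ / (8 * ω₀))) := by
      rw [div_lt_iff₀ (by rw [← hS']; exact hSpos)] at h1; exact h1
    have h3 : α < ε ^ 2 * (27 * γ ^ 2 / (16 * ω₀ ^ 2) * x ^ ((4:ℝ)/3)) := by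
      calc α < ε * (Real.sqrt 2 * B / (2 * ω₀)) * x ^ ((1:ℝ)/3) * (ε * (9 * γ / (8 * ω₀))) := h2'
        _ = ε ^ 2 * (27 * γ ^ 2 / (16 * ω₀ ^ 2) * x ^ ((4:ℝ)/3)) := by
            rw [hsB, ← hxx]; field_simp; ring
    rw [← hKeq] at h3
    have hD : 0 < 27 * γ ^ 2 / (16 * ω₀ ^ 2) * x ^ ((4:ℝ)/3) := by positivity
    exact lt_of_mul_lt_mul_right h3 hD.le
  · intro h
    have hD : 0 < 27 * γ ^ 2 / (16 * ω₀ ^ 2) * x ^ ((4:ℝ)/3) := by positivity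
    have h3 : α < ε ^ 2 * (27 * γ ^ 2 / (16 * ω₀ ^ 2) * x ^ ((4:ℝ)/3)) := by
      rw [← hKeq]
      exact mul_lt_mul_of_pos_right h hD
    have h2' : α < ε * (Real.sqrt 2 * B / (2 * ω₀)) * x ^ ((1:ℝ)/3) * (ε * (9 * γ / (8 * ω₀))) := by
      calc α < ε ^ 2 * (27 * γ ^ 2 / (16 * ω₀ ^ 2) * x ^ ((4:ℝ)/3)) := h3
        _ = ε * (Real.sqrt 2 * B / (2 * ω₀)) * x ^ ((1:ℝ)/3) * (ε * (9 * γ / (8 * ω₀))) := by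
            rw [hsB, ← hxx]; field_simp; ring
    have h1 : α / (ε * (9 * γ / (8 * ω₀))) < ε * (Real.sqrt 2 * B / (2 * ω₀)) * x ^ ((1:ℝ)/3) := by
      rw [div_lt_iff₀ (by rw [← hS']; exact hSpos)]; exact h2'
    linarith
end

section
/- Suppose y: [τ₀, ∞) → ℝⁿ solves dy/dτ = εf(y, ω₀τ) where f(y, ξ) is 2π-periodic in ξ, and Y solves the truncated averaged equation dY/dτ = εF₀(Y) with F₀(Y) = (1/(2π))∫₀^{2π} f(Y, ξ)dξ and Y(τ₀) = y(τ₀). If f is bounded with bounded, Lipschitz first derivatives, then there are constants C, ε₀ > 0 such that for all 0 < ε ≤ ε₀ and all stroboscopic times τ_j = τ₀ + j·(2π/ω₀) with τ_j - τ₀ ≤ L/ε, one has |y(τ_j) - Y(τ_j)| ≤ Cε. -/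
open Real Filter

/-- First-order stroboscopic averaging: if f(y, ξ) is 2π-periodic in ξ,
bounded, with bounded Lipschitz first derivatives, then solutions of
dy/dτ = εf(y, ω₀τ) and of the averaged equation dY/dτ = εF₀(Y),
F₀(Y) = (1/2π)∫₀^{2π} f(Y, ξ)dξ, with the same initial value at τ₀, stay
O(ε)-close at all stroboscopic times τ₀ + j·2π/ω₀ in intervals of length L/ε. -/
theorem stmt_15 (n : ℕ) (ω₀ τ₀ L : ℝ) (hω : ω₀ > 0) (hL : L > 0)
    (f : (Fin n → ℝ) → ℝ → (Fin n → ℝ))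
    (hper : ∀ y ξ, f y (ξ + 2 * π) = f y ξ)
    (hdiff : ContDiff ℝ 1 (fun p : (Fin n → ℝ) × ℝ => f p.1 p.2))
    (M : ℝ)
    (hbound : ∀ y ξ, ‖f y ξ‖ ≤ M)
    (hdbound : ∀ p : (Fin n → ℝ) × ℝ,
      ‖fderiv ℝ (fun q : (Fin n → ℝ) × ℝ => f q.1 q.2) p‖ ≤ M)
    (K : NNReal)
    (hdlip : LipschitzWith K (fderiv ℝ (fun q : (Fin n → ℝ) × ℝ => f q.1 q.2))) :
    ∃ C > 0, ∃ ε₀ > 0, ∀ ε : ℝ, 0 < ε → ε ≤ ε₀ →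
      ∀ y Y : ℝ → (Fin n → ℝ),
        (∀ τ, HasDerivAt y (ε • f (y τ) (ω₀ * τ)) τ) →
        (∀ τ, HasDerivAt Y
          (ε • ((2 * π)⁻¹ • ∫ ξ in (0 : ℝ)..(2 * π), f (Y τ) ξ)) τ) →
        y τ₀ = Y τ₀ →
        ∀ j : ℕ, (j : ℝ) * (2 * π / ω₀) ≤ L / ε →
          ‖y (τ₀ + j * (2 * π / ω₀)) - Y (τ₀ + j * (2 * π / ω₀))‖ ≤ C * ε := by
  have hM0 : 0 ≤ M := le_trans (norm_nonneg _) (hbound 0 0)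
  have hπ : (0:ℝ) < 2 * π := by positivity
  set T : ℝ := 2 * π / ω₀ with hTdef
  have hT : 0 < T := div_pos hπ hω
  set F₀ : (Fin n → ℝ) → (Fin n → ℝ) :=
    fun x => (2 * π)⁻¹ • ∫ ξ in (0:ℝ)..(2*π), f x ξ with hF₀def
  have hfc : Continuous (fun p : (Fin n → ℝ) × ℝ => f p.1 p.2) := hdiff.continuous
  -- f is Lipschitz in the first variable with constant M
  have hlipx : ∀ (x x' : Fin n → ℝ) (ξ : ℝ), ‖f x ξ - f x' ξ‖ ≤ M * ‖x - x'‖ := by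
    intro x x' ξ
    have h := convex_univ.norm_image_sub_le_of_norm_fderiv_le
      (f := fun q : (Fin n → ℝ) × ℝ => f q.1 q.2)
      (fun p _ => (hdiff.differentiable one_ne_zero).differentiableAt)
      (fun p _ => hdbound p) (Set.mem_univ (x', ξ)) (Set.mem_univ (x, ξ))
    have hnorm : ‖((x, ξ) - (x', ξ) : (Fin n → ℝ) × ℝ)‖ = ‖x - x'‖ := by
      rw [Prod.mk_sub_mk, sub_self, Prod.norm_def]
      simp [max_eq_left (norm_nonneg _)]
    rw [hnorm] at h
    exact h
  -- continuity of ξ ↦ f x ξ and related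
  have hfcx : ∀ x : Fin n → ℝ, Continuous (fun ξ => f x ξ) :=
    fun x => hfc.comp (continuous_const.prodMk continuous_id)
  -- bound on F₀
  have hF₀bound : ∀ x, ‖F₀ x‖ ≤ M := by
    intro x
    rw [hF₀def]
    have h := intervalIntegral.norm_integral_le_of_norm_le_const
      (a := (0:ℝ)) (b := 2*π) (C := M) (f := fun ξ => f x ξ) (fun ξ _ => hbound x ξ)
    rw [norm_smul, Real.norm_eq_abs, abs_of_pos (show (0:ℝ) < (2*π)⁻¹ by positivity)]
    calc (2*π)⁻¹ * ‖∫ ξ in (0:ℝ)..(2*π), f x ξ‖ ≤ (2*π)⁻¹ * (M * |2*π - 0|) := by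
          apply mul_le_mul_of_nonneg_left h (by positivity)
      _ = M := by rw [sub_zero, abs_of_pos hπ]; field_simp
  -- F₀ is Lipschitz with constant M
  have hF₀lip : ∀ x x', ‖F₀ x - F₀ x'‖ ≤ M * ‖x - x'‖ := by
    intro x x'
    rw [hF₀def]
    rw [← smul_sub, ← intervalIntegral.integral_sub
      ((hfcx x).intervalIntegrable _ _) ((hfcx x').intervalIntegrable _ _)]
    rw [norm_smul, Real.norm_eq_abs, abs_of_pos (show (0:ℝ) < (2*π)⁻¹ by positivity)]
    have h := intervalIntegral.norm_integral_le_of_norm_le_const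
      (a := (0:ℝ)) (b := 2*π) (C := M * ‖x - x'‖) (f := fun ξ => f x ξ - f x' ξ)
      (fun ξ _ => hlipx x x' ξ)
    calc (2*π)⁻¹ * ‖∫ ξ in (0:ℝ)..(2*π), (f x ξ - f x' ξ)‖
        ≤ (2*π)⁻¹ * (M * ‖x - x'‖ * |2*π - 0|) :=
          mul_le_mul_of_nonneg_left h (by positivity)
      _ = M * ‖x - x'‖ := by rw [sub_zero, abs_of_pos hπ]; field_simp
  have hF₀cont : Continuous F₀ := by
    apply LipschitzWith.continuous (K := M.toNNReal)
    apply LipschitzWith.of_dist_le_mul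
    intro a b
    simpa [dist_eq_norm, Real.coe_toNNReal M hM0] using hF₀lip a b
  -- the constant
  have hexp : 0 < Real.exp (M * L) := Real.exp_pos _
  have hC0 : (0:ℝ) ≤ 2 * M * T * Real.exp (M * L) :=
    mul_nonneg (mul_nonneg (by linarith) hT.le) hexp.le
  refine ⟨2 * M * T * Real.exp (M * L) + 1, by linarith, 1, one_pos, ?_⟩
  intro ε hε hε1 y Y hy hY hinit j hj
  have hyc : Continuous y := by
    rw [continuous_iff_continuousAt]; exact fun τ => (hy τ).continuousAt
  have hYc : Continuous Y := by
    rw [continuous_iff_continuousAt]; exact fun τ => (hY τ).continuousAt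
  have hY' : ∀ τ, HasDerivAt Y (ε • F₀ (Y τ)) τ := hY
  -- continuity of the integrand functions
  have hcy : Continuous (fun s => f (y s) (ω₀ * s)) :=
    hfc.comp (hyc.prodMk (continuous_const.mul continuous_id))
  have hcyc : ∀ c : Fin n → ℝ, Continuous (fun s => f c (ω₀ * s)) :=
    fun c => hfc.comp (continuous_const.prodMk (continuous_const.mul continuous_id))
  have hcY : Continuous (fun s => F₀ (Y s)) := hF₀cont.comp hYc
  -- fundamental theorem of calculus
  have hyFTC : ∀ a b : ℝ, y b - y a = ∫ s in a..b, ε • f (y s) (ω₀ * s) := by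
    intro a b
    exact (intervalIntegral.integral_eq_sub_of_hasDerivAt (fun s _ => hy s)
      ((hcy.const_smul ε).intervalIntegrable a b)).symm
  have hYFTC : ∀ a b : ℝ, Y b - Y a = ∫ s in a..b, ε • F₀ (Y s) := by
    intro a b
    exact (intervalIntegral.integral_eq_sub_of_hasDerivAt (fun s _ => hY' s)
      ((hcY.const_smul ε).intervalIntegrable a b)).symm
  -- coarse growth bounds
  have hygrow : ∀ a b : ℝ, a ≤ b → ‖y b - y a‖ ≤ ε * M * (b - a) := by
    intro a b hab
    rw [hyFTC a b]
    have h := intervalIntegral.norm_integral_le_of_norm_le_const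
      (a := a) (b := b) (C := ε * M) (f := fun s => ε • f (y s) (ω₀ * s))
      (fun s _ => by
        rw [norm_smul, Real.norm_eq_abs, abs_of_pos hε]
        exact mul_le_mul_of_nonneg_left (hbound _ _) hε.le)
    rwa [abs_of_nonneg (sub_nonneg.mpr hab)] at h
  have hYgrow : ∀ a b : ℝ, a ≤ b → ‖Y b - Y a‖ ≤ ε * M * (b - a) := by
    intro a b hab
    rw [hYFTC a b]
    have h := intervalIntegral.norm_integral_le_of_norm_le_const
      (a := a) (b := b) (C := ε * M) (f := fun s => ε • F₀ (Y s))
      (fun s _ => by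
        rw [norm_smul, Real.norm_eq_abs, abs_of_pos hε]
        exact mul_le_mul_of_nonneg_left (hF₀bound _) hε.le)
    rwa [abs_of_nonneg (sub_nonneg.mpr hab)] at h
  -- periodic averaging identity
  have hperint : ∀ (c : Fin n → ℝ) (a : ℝ),
      (∫ s in a..a+T, f c (ω₀ * s)) = T • F₀ c := by
    intro c a
    have hω0 : ω₀ ≠ 0 := ne_of_gt hω
    have h1 : (∫ s in a..a+T, f c (ω₀ * s))
        = ω₀⁻¹ • ∫ ξ in ω₀*a..ω₀*(a+T), f c ξ :=
      intervalIntegral.integral_comp_mul_left (fun ξ => f c ξ) hω0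
    have hTω : ω₀*(a+T) = ω₀*a + 2*π := by
      rw [hTdef]; field_simp
    have hper' : Function.Periodic (fun ξ => f c ξ) (2*π) := fun ξ => hper c ξ
    have h2 : (∫ ξ in ω₀*a..ω₀*a + 2*π, f c ξ) = ∫ ξ in (0:ℝ)..(0 + 2*π), f c ξ :=
      hper'.intervalIntegral_add_eq (ω₀*a) 0
    rw [h1, hTω, h2, zero_add, hF₀def, smul_smul]
    congr 1
    rw [hTdef]; field_simp
  -- one-period step estimate
  have step : ∀ t : ℝ, ‖y (t+T) - Y (t+T)‖
      ≤ (1 + ε*M*T) * ‖y t - Y t‖ + 2*ε^2*M^2*T^2 := by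
    intro t
    have htT : t ≤ t + T := le_add_of_nonneg_right hT.le
    have hg1c : Continuous (fun s => ε • (f (y s) (ω₀*s) - f (y t) (ω₀*s))) :=
      (hcy.sub (hcyc (y t))).const_smul ε
    have hg2c : Continuous (fun s => ε • (F₀ (Y t) - F₀ (Y s))) :=
      (continuous_const.sub hcY).const_smul ε
    have hg3c : Continuous (fun s => ε • f (y t) (ω₀*s) - ε • F₀ (Y t)) :=
      ((hcyc (y t)).const_smul ε).sub continuous_const
    -- value of third integral
    have hI3 : (∫ s in t..t+T, (ε • f (y t) (ω₀*s) - ε • F₀ (Y t)))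
        = ε • (T • F₀ (y t)) - ε • (T • F₀ (Y t)) := by
      rw [intervalIntegral.integral_sub (f := fun s => ε • f (y t) (ω₀*s))
        (((hcyc (y t)).const_smul ε).intervalIntegrable _ _)
        (continuous_const.intervalIntegrable _ _)]
      rw [intervalIntegral.integral_smul, hperint (y t) t,
        intervalIntegral.integral_const, add_sub_cancel_left]
      module
    -- main decomposition
    have hdecomp : y (t+T) - Y (t+T) = (y t - Y t)
        + ((∫ s in t..t+T, ε • (f (y s) (ω₀*s) - f (y t) (ω₀*s)))
          + (∫ s in t..t+T, ε • (F₀ (Y t) - F₀ (Y s)))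
          + (ε • (T • F₀ (y t)) - ε • (T • F₀ (Y t)))) := by
      rw [← hI3, ← intervalIntegral.integral_add (hg1c.intervalIntegrable _ _)
          (hg2c.intervalIntegrable _ _),
        ← intervalIntegral.integral_add
          (f := fun s => ε • (f (y s) (ω₀*s) - f (y t) (ω₀*s)) + ε • (F₀ (Y t) - F₀ (Y s)))
          ((hg1c.add hg2c).intervalIntegrable _ _) (hg3c.intervalIntegrable _ _)]
      have : (∫ s in t..t+T, (ε • (f (y s) (ω₀*s) - f (y t) (ω₀*s))
          + ε • (F₀ (Y t) - F₀ (Y s)) + (ε • f (y t) (ω₀*s) - ε • F₀ (Y t))))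
          = (∫ s in t..t+T, (ε • f (y s) (ω₀*s) - ε • F₀ (Y s))) := by
        apply intervalIntegral.integral_congr
        intro s _
        simp only [smul_sub]
        abel
      rw [this, intervalIntegral.integral_sub (f := fun s => ε • f (y s) (ω₀*s)) (g := fun s => ε • F₀ (Y s))
        ((hcy.const_smul ε).intervalIntegrable _ _)
        ((hcY.const_smul ε).intervalIntegrable _ _),
        ← hyFTC, ← hYFTC]
      abel
    -- bound the first integral
    have hb1 : ‖∫ s in t..t+T, ε • (f (y s) (ω₀*s) - f (y t) (ω₀*s))‖
        ≤ ε^2 * M^2 * T^2 := by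
      have h := intervalIntegral.norm_integral_le_of_norm_le_const
        (a := t) (b := t+T) (C := ε * (M * (ε * M * T)))
        (f := fun s => ε • (f (y s) (ω₀*s) - f (y t) (ω₀*s)))
        (fun s hs => by
          rw [Set.uIoc_of_le htT] at hs
          have hst : ‖y s - y t‖ ≤ ε * M * T := by
            refine (hygrow t s hs.1.le).trans ?_
            have hstT : s - t ≤ T := by linarith [hs.2]
            exact mul_le_mul_of_nonneg_left hstT (mul_nonneg hε.le hM0)
          rw [norm_smul, Real.norm_eq_abs, abs_of_pos hε]
          refine mul_le_mul_of_nonneg_left ?_ hε.le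
          exact (hlipx (y s) (y t) (ω₀*s)).trans
            (mul_le_mul_of_nonneg_left hst hM0))
      rw [add_sub_cancel_left, abs_of_pos hT] at h
      calc ‖_‖ ≤ ε * (M * (ε * M * T)) * T := h
        _ = ε^2 * M^2 * T^2 := by ring
    -- bound the second integral
    have hb2 : ‖∫ s in t..t+T, ε • (F₀ (Y t) - F₀ (Y s))‖
        ≤ ε^2 * M^2 * T^2 := by
      have h := intervalIntegral.norm_integral_le_of_norm_le_const
        (a := t) (b := t+T) (C := ε * (M * (ε * M * T)))
        (f := fun s => ε • (F₀ (Y t) - F₀ (Y s)))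
        (fun s hs => by
          rw [Set.uIoc_of_le htT] at hs
          have hst : ‖Y t - Y s‖ ≤ ε * M * T := by
            rw [norm_sub_rev]
            refine (hYgrow t s hs.1.le).trans ?_
            have hstT : s - t ≤ T := by linarith [hs.2]
            exact mul_le_mul_of_nonneg_left hstT (mul_nonneg hε.le hM0)
          rw [norm_smul, Real.norm_eq_abs, abs_of_pos hε]
          refine mul_le_mul_of_nonneg_left ?_ hε.le
          exact (hF₀lip (Y t) (Y s)).trans
            (mul_le_mul_of_nonneg_left hst hM0))
      rw [add_sub_cancel_left, abs_of_pos hT] at h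
      calc ‖_‖ ≤ ε * (M * (ε * M * T)) * T := h
        _ = ε^2 * M^2 * T^2 := by ring
    -- bound the third term
    have hb3 : ‖ε • (T • F₀ (y t)) - ε • (T • F₀ (Y t))‖
        ≤ ε * M * T * ‖y t - Y t‖ := by
      rw [← smul_sub, ← smul_sub, norm_smul, norm_smul,
        Real.norm_eq_abs, Real.norm_eq_abs, abs_of_pos hε, abs_of_pos hT]
      calc ε * (T * ‖F₀ (y t) - F₀ (Y t)‖) ≤ ε * (T * (M * ‖y t - Y t‖)) := by
            refine mul_le_mul_of_nonneg_left (mul_le_mul_of_nonneg_left ?_ hT.le) hε.le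
            exact hF₀lip _ _
        _ = ε * M * T * ‖y t - Y t‖ := by ring
    rw [hdecomp]
    calc ‖(y t - Y t) + _‖ ≤ ‖y t - Y t‖ + (‖∫ s in t..t+T, ε • (f (y s) (ω₀*s) - f (y t) (ω₀*s))‖
          + ‖∫ s in t..t+T, ε • (F₀ (Y t) - F₀ (Y s))‖
          + ‖ε • (T • F₀ (y t)) - ε • (T • F₀ (Y t))‖) := by
          refine (norm_add_le _ _).trans (by gcongr; exact (norm_add_le _ _).trans (by gcongr; exact norm_add_le _ _))
      _ ≤ ‖y t - Y t‖ + (ε^2*M^2*T^2 + ε^2*M^2*T^2 + ε*M*T*‖y t - Y t‖) := by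
          gcongr
      _ = (1 + ε*M*T) * ‖y t - Y t‖ + 2*ε^2*M^2*T^2 := by ring
  -- discrete Gronwall by induction
  have ebound : ∀ k : ℕ, ‖y (τ₀ + k*T) - Y (τ₀ + k*T)‖
      ≤ 2*ε*M*T*((1 + ε*M*T)^k - 1) := by
    intro k
    induction k with
    | zero => simp [hinit]
    | succ k ih =>
      have hsucc : τ₀ + ((k+1 : ℕ) : ℝ)*T = (τ₀ + (k:ℝ)*T) + T := by
        push_cast; ring
      rw [hsucc]
      have h1 := step (τ₀ + (k:ℝ)*T)
      have h2 : (1 + ε*M*T) * ‖y (τ₀ + (k:ℝ)*T) - Y (τ₀ + (k:ℝ)*T)‖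
          ≤ (1 + ε*M*T) * (2*ε*M*T*((1 + ε*M*T)^k - 1)) := by
        refine mul_le_mul_of_nonneg_left ih ?_
        nlinarith
      calc ‖y ((τ₀ + (k:ℝ)*T) + T) - Y ((τ₀ + (k:ℝ)*T) + T)‖
          ≤ (1 + ε*M*T) * (2*ε*M*T*((1 + ε*M*T)^k - 1)) + 2*ε^2*M^2*T^2 := by
            linarith
        _ = 2*ε*M*T*((1 + ε*M*T)^(k+1) - 1) := by ring
  -- conclude
  have haj : ε*M*T*(j:ℝ) ≤ M*L := by
    have h1 : ε * ((j:ℝ)*T) ≤ L := by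
      have := mul_le_mul_of_nonneg_left hj hε.le
      calc ε * ((j:ℝ)*T) ≤ ε * (L/ε) := this
        _ = L := by field_simp
    nlinarith
  have hpow : (1 + ε*M*T)^j ≤ Real.exp (M*L) := by
    have h1 : (1 + ε*M*T) ≤ Real.exp (ε*M*T) := by
      linarith [Real.add_one_le_exp (ε*M*T)]
    calc (1 + ε*M*T)^j ≤ (Real.exp (ε*M*T))^j := by
          apply pow_le_pow_left₀ (by positivity) h1
      _ = Real.exp (ε*M*T*(j:ℝ)) := by
          rw [← Real.exp_nat_mul]; ring_nf
      _ ≤ Real.exp (M*L) := Real.exp_le_exp.2 haj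
  have hfin := ebound j
  have ha0 : (0:ℝ) ≤ ε*M*T := mul_nonneg (mul_nonneg hε.le hM0) hT.le
  have hc0 : (0:ℝ) ≤ 2*ε*M*T := by linarith
  have h2 : (1 + ε*M*T)^j - 1 ≤ Real.exp (M*L) := by linarith
  have : 2*ε*M*T*((1 + ε*M*T)^j - 1) ≤ (2*M*T*Real.exp (M*L) + 1) * ε := by
    calc 2*ε*M*T*((1 + ε*M*T)^j - 1) ≤ 2*ε*M*T*Real.exp (M*L) :=
          mul_le_mul_of_nonneg_left h2 hc0
      _ = (2*M*T*Real.exp (M*L)) * ε := by ring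
      _ ≤ (2*M*T*Real.exp (M*L) + 1) * ε := by nlinarith
  exact hfin.trans this
end
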